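/- Let · be the commutative bilinear multiplication on the Schrödinger algebra S_2 determined on basis elements by s_{12}·s_{12} = z and u·v = 0 for all other pairs (u, v) of basis elements. Then · is associative and (S_2, ·, [·,·]) is a transposed Poisson algebra; in particular, S_2 admits a non-trivial (nonzero) transposed Poisson structure. -/

import Mathlib

noncomputable section

open Submodule

/-- Index type for the standard basis
`{e, f, h, z, x_i, y_i (1 ≤ i ≤ n), s_{jk} (1 ≤ j < k ≤ n)}`
of the Schrödinger algebra `S_n` (indices shifted to start from `0`). -/
inductive SIdx (n : ℕ) : Type where
  | E : SIdx n
  | F : SIdx n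
  | H : SIdx n
  | Z : SIdx n
  | X : Fin n → SIdx n
  | Y : Fin n → SIdx n
  | S : (j k : Fin n) → j < k → SIdx n

/-- Kronecker delta with values in `ℂ`. -/
def kd {n : ℕ} (i j : Fin n) : ℂ := if i = j then 1 else 0

variable {n : ℕ} {L : Type*} [LieRing L] [LieAlgebra ℂ L]

/-- The element `s_{jk}` for arbitrary indices, with the convention
`s_{kj} = -s_{jk}` and `s_{jj} = 0`. -/
def sg (b : Module.Basis (SIdx n) ℂ L) (j k : Fin n) : L :=
  if h : j < k then b (.S j k h)
  else if h' : k < j then - b (.S k j h')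
  else 0

/-- A basis of a complex Lie algebra indexed by `SIdx n` realizes the
Schrödinger algebra `S_n` if the brackets of basis vectors are as follows
(all brackets of basis vectors not determined by the relations below and
anticommutativity are zero). -/
structure IsSchrodinger (b : Module.Basis (SIdx n) ℂ L) : Prop where
  lie_e_f : ⁅b .E, b .F⁆ = b .H
  lie_h_e : ⁅b .H, b .E⁆ = (2 : ℂ) • b .E
  lie_f_h : ⁅b .F, b .H⁆ = (2 : ℂ) • b .F
  lie_x_y : ∀ i j, ⁅b (.X i), b (.Y j)⁆ = kd i j • b .Z
  lie_x_x : ∀ i j, ⁅b (.X i), b (.X j)⁆ = 0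
  lie_y_y : ∀ i j, ⁅b (.Y i), b (.Y j)⁆ = 0
  lie_h_x : ∀ i, ⁅b .H, b (.X i)⁆ = b (.X i)
  lie_h_y : ∀ i, ⁅b .H, b (.Y i)⁆ = - b (.Y i)
  lie_e_y : ∀ i, ⁅b .E, b (.Y i)⁆ = b (.X i)
  lie_e_x : ∀ i, ⁅b .E, b (.X i)⁆ = 0
  lie_f_x : ∀ i, ⁅b .F, b (.X i)⁆ = b (.Y i)
  lie_f_y : ∀ i, ⁅b .F, b (.Y i)⁆ = 0
  lie_z : ∀ u : SIdx n, ⁅b .Z, b u⁆ = 0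
  lie_s_x : ∀ j k i, ⁅sg b j k, b (.X i)⁆ = kd k i • b (.X j) - kd j i • b (.X k)
  lie_s_y : ∀ j k i, ⁅sg b j k, b (.Y i)⁆ = kd k i • b (.Y j) - kd j i • b (.Y k)
  lie_s_s : ∀ j k l m, ⁅sg b j k, sg b l m⁆ =
      kd l k • sg b j m + kd j m • sg b k l + kd m k • sg b l j + kd l j • sg b m k
  lie_e_s : ∀ j k, ⁅b .E, sg b j k⁆ = 0
  lie_f_s : ∀ j k, ⁅b .F, sg b j k⁆ = 0
  lie_h_s : ∀ j k, ⁅b .H, sg b j k⁆ = 0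

/-- A `1/2`-derivation of a complex Lie algebra: a linear map `φ` with
`φ([x,y]) = (1/2)([φ(x),y] + [x,φ(y)])`. -/
def IsHalfDeriv (φ : L →ₗ[ℂ] L) : Prop :=
  ∀ x y : L, φ ⁅x, y⁆ = (2⁻¹ : ℂ) • (⁅φ x, y⁆ + ⁅x, φ y⁆)

/-- The set of basis vectors spanning the even part `(S_n)₀`:
`{e, f, h, z, s_{kl}}`. -/
def evenSet (b : Module.Basis (SIdx n) ℂ L) : Set L :=
  {v | v = b .E ∨ v = b .F ∨ v = b .H ∨ v = b .Z ∨ ∃ j k, ∃ h : j < k, v = b (.S j k h)}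

/-- The set of basis vectors spanning the odd part `(S_n)₁`: `{x_i, y_i}`. -/
def oddSet (b : Module.Basis (SIdx n) ℂ L) : Set L :=
  {v | ∃ i : Fin n, v = b (.X i) ∨ v = b (.Y i)}

/-- The commutative multiplication on `S₂` determined on basis vectors by
`s₁₂ · s₁₂ = z` and `u · v = 0` for all other pairs of basis vectors. -/
def mstd (b : Module.Basis (SIdx n) ℂ L) : L →ₗ[ℂ] L →ₗ[ℂ] L :=
  b.constr ℂ fun u => b.constr ℂ fun v =>
    match u, v with
    | .S _ _ _, .S _ _ _ => b .Z
    | _, _ => 0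

section Aux

variable {L : Type*} [LieRing L] [LieAlgebra ℂ L]

/-- Abbreviation for the index `s₀₁`. -/
def S01 : SIdx 2 := .S 0 1 (by decide)

lemma fin2_lt {j k : Fin 2} (h : j < k) : j = 0 ∧ k = 1 := by
  revert h; revert j k; decide

@[simp] lemma S_eq {j k : Fin 2} (h : j < k) : SIdx.S j k h = S01 := by
  obtain ⟨rfl, rfl⟩ := fin2_lt h; rfl

lemma E_ne : (SIdx.E : SIdx 2) ≠ S01 := fun h => nomatch h
lemma F_ne : (SIdx.F : SIdx 2) ≠ S01 := fun h => nomatch h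
lemma H_ne : (SIdx.H : SIdx 2) ≠ S01 := fun h => nomatch h
lemma Z_ne : (SIdx.Z : SIdx 2) ≠ S01 := fun h => nomatch h
lemma X_ne (i : Fin 2) : (SIdx.X i) ≠ S01 := fun h => nomatch h
lemma Y_ne (i : Fin 2) : (SIdx.Y i) ≠ S01 := fun h => nomatch h

section Sing
variable {M : Type*} [Zero M] (c : M)
@[simp] lemma singE : Finsupp.single (SIdx.E : SIdx 2) c S01 = 0 :=
  Finsupp.single_eq_of_ne' E_ne
@[simp] lemma singF : Finsupp.single (SIdx.F : SIdx 2) c S01 = 0 :=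
  Finsupp.single_eq_of_ne' F_ne
@[simp] lemma singH : Finsupp.single (SIdx.H : SIdx 2) c S01 = 0 :=
  Finsupp.single_eq_of_ne' H_ne
@[simp] lemma singZ : Finsupp.single (SIdx.Z : SIdx 2) c S01 = 0 :=
  Finsupp.single_eq_of_ne' Z_ne
@[simp] lemma singX (i : Fin 2) : Finsupp.single (SIdx.X i) c S01 = 0 :=
  Finsupp.single_eq_of_ne' (X_ne i)
@[simp] lemma singY (i : Fin 2) : Finsupp.single (SIdx.Y i) c S01 = 0 :=
  Finsupp.single_eq_of_ne' (Y_ne i)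
@[simp] lemma singS : Finsupp.single (S01 : SIdx 2) c S01 = c :=
  Finsupp.single_eq_same
end Sing

lemma sg01 (b : Module.Basis (SIdx 2) ℂ L) : sg b 0 1 = b S01 := by
  rw [sg, dif_pos (by decide : (0:Fin 2) < 1)]; rfl

lemma phi_S01 (b : Module.Basis (SIdx 2) ℂ L) : b.coord S01 (b S01) = 1 := by
  simp

lemma phi_zero_of_ne (b : Module.Basis (SIdx 2) ℂ L) (u : SIdx 2) (h : u ≠ S01) :
    b.coord S01 (b u) = 0 := by
  rw [Module.Basis.coord_apply, Module.Basis.repr_self]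
  exact Finsupp.single_eq_of_ne' h

lemma z_lie (b : Module.Basis (SIdx 2) ℂ L) (hb : IsSchrodinger b) (x : L) :
    ⁅b .Z, x⁆ = 0 := by
  have h : LieAlgebra.ad ℂ L (b .Z) = 0 := b.ext fun u => by
    simp [LieAlgebra.ad_apply, hb.lie_z u]
  have := LinearMap.congr_fun h x
  simpa [LieAlgebra.ad_apply] using this

lemma lie_z_right (b : Module.Basis (SIdx 2) ℂ L) (hb : IsSchrodinger b) (x : L) :
    ⁅x, b .Z⁆ = 0 := by
  rw [← lie_skew, z_lie b hb, neg_zero]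

lemma phi_lie_basis (b : Module.Basis (SIdx 2) ℂ L) (hb : IsSchrodinger b) (u v : SIdx 2) :
    b.coord S01 ⁅b u, b v⁆ = 0 := by
  rcases u with _|_|_|_|i|i|⟨j,k,hjk⟩ <;> rcases v with _|_|_|_|l|l|⟨p,q,hpq⟩ <;>
    first
    | (simp [← sg01, z_lie b hb, lie_z_right b hb,
        hb.lie_e_f, hb.lie_h_e, hb.lie_f_h, hb.lie_x_y, hb.lie_x_x, hb.lie_y_y,
        hb.lie_h_x, hb.lie_h_y, hb.lie_e_y, hb.lie_e_x, hb.lie_f_x, hb.lie_f_y,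
        hb.lie_s_x, hb.lie_s_y, hb.lie_e_s, hb.lie_f_s, hb.lie_h_s]
       done)
    | (rw [← lie_skew, map_neg, neg_eq_zero]
       simp [← sg01, z_lie b hb, lie_z_right b hb,
        hb.lie_e_f, hb.lie_h_e, hb.lie_f_h, hb.lie_x_y, hb.lie_x_x, hb.lie_y_y,
        hb.lie_h_x, hb.lie_h_y, hb.lie_e_y, hb.lie_e_x, hb.lie_f_x, hb.lie_f_y,
        hb.lie_s_x, hb.lie_s_y, hb.lie_e_s, hb.lie_f_s, hb.lie_h_s]
       done)

lemma phi_lie (b : Module.Basis (SIdx 2) ℂ L) (hb : IsSchrodinger b) (x y : L) :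
    b.coord S01 ⁅x, y⁆ = 0 := by
  let B : L →ₗ[ℂ] L →ₗ[ℂ] ℂ :=
    { toFun := fun x => (b.coord S01) ∘ₗ (LieAlgebra.ad ℂ L x)
      map_add' := by intro a c; ext w; simp [add_lie]
      map_smul' := by intro c a; ext w; simp [smul_lie] }
  have hB : B = 0 := b.ext fun u => b.ext fun v => by
    simpa [B, LieAlgebra.ad_apply] using phi_lie_basis b hb u v
  have := LinearMap.congr_fun (LinearMap.congr_fun hB x) y
  simpa [B, LieAlgebra.ad_apply] using this

lemma mstd_eq (b : Module.Basis (SIdx 2) ℂ L) (x y : L) :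
    mstd b x y = (b.coord S01 x * b.coord S01 y) • b .Z := by
  have h : mstd b = (b.coord S01).smulRight ((b.coord S01).smulRight (b .Z)) := by
    refine b.ext fun u => b.ext fun v => ?_
    simp only [mstd, Module.Basis.constr_basis, LinearMap.smulRight_apply]
    cases u <;> cases v <;> simp
  rw [h]
  simp [LinearMap.smulRight_apply, mul_smul]

end Aux

set_option maxHeartbeats 1000000

/-- The commutative multiplication on `S₂` determined on the
basis by `s₁₂ · s₁₂ = z` and zero for all other pairs of basis vectors is
associative and makes `S₂` a transposed Poisson algebra; in particular `S₂`
admits a non-trivial (nonzero) transposed Poisson structure. -/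
theorem mstd_is_nontrivial_transposed_poisson_structure
    (L : Type*) [LieRing L] [LieAlgebra ℂ L]
    (b : Module.Basis (SIdx 2) ℂ L) (hb : IsSchrodinger b) :
    mstd b (b (.S 0 1 (by decide))) (b (.S 0 1 (by decide))) = b .Z ∧
    (∀ u v : SIdx 2, u ≠ .S 0 1 (by decide) ∨ v ≠ .S 0 1 (by decide) →
      mstd b (b u) (b v) = 0) ∧
    (∀ x y : L, mstd b x y = mstd b y x) ∧
    (∀ x y w : L, mstd b (mstd b x y) w = mstd b x (mstd b y w)) ∧
    (∀ x y w : L, (2 : ℂ) • mstd b w ⁅x, y⁆ = ⁅mstd b w x, y⁆ + ⁅x, mstd b w y⁆) ∧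
    mstd b ≠ 0 := by
  have h1 : mstd b (b (.S 0 1 (by decide))) (b (.S 0 1 (by decide))) = b .Z := by
    rw [mstd_eq]
    have heq : b (SIdx.S 0 1 (by decide)) = b S01 := rfl
    rw [heq, phi_S01]
    simp
  refine ⟨h1, ?_, ?_, ?_, ?_, ?_⟩
  · intro u v huv
    rw [mstd_eq]
    rcases huv with h | h
    · rw [phi_zero_of_ne b u h]; simp
    · rw [phi_zero_of_ne b v h]; simp
  · intro x y
    rw [mstd_eq, mstd_eq, mul_comm]
  · intro x y w
    rw [mstd_eq b x y, mstd_eq b y w, mstd_eq, mstd_eq]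
    simp [mul_smul, phi_zero_of_ne b _ Z_ne]
  · intro x y w
    rw [mstd_eq, mstd_eq, mstd_eq]
    simp [phi_lie b hb, smul_lie, lie_smul, z_lie b hb, lie_z_right b hb]
  · intro h0
    apply b.ne_zero SIdx.Z
    rw [← h1, h0]
    simp
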